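/- Let p > 0 be a real number and let G be a connected simple graph with n vertices and m edges, with Laplacian eigenvalues 0 = λ_1 < λ_2 ≤ ... ≤ λ_n. Then BH(G) ≥ n·((2m)^{p+1} / Σ_{i=2}^{n} λ_i^{3p+1})^{1/p}, with equality if and only if G is the complete graph K_n. -/

import Mathlib

open Finset Polynomial

/-- The eigenvalues of the Laplacian matrix of `G` over `ℝ`, as produced (in no
particular order) by the spectral theorem for symmetric matrices. -/
noncomputable def lapEigsUnordered {V : Type*} [Fintype V] [DecidableEq V]
    (G : SimpleGraph V) [DecidableRel G.Adj] : V → ℝ :=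
  (SimpleGraph.posSemidef_lapMatrix (R := ℝ) (G := G)).1.eigenvalues

/-- `μ : Fin n → ℝ` lists the eigenvalues of the Laplacian matrix of `G`
in nondecreasing order (so, `0`-based, `μ ⟨0,_⟩ = λ₁ ≤ μ ⟨1,_⟩ = λ₂ ≤ ⋯`). -/
def IsLapEigSeq {V : Type*} [Fintype V] [DecidableEq V] (G : SimpleGraph V)
    [DecidableRel G.Adj] {n : ℕ} (μ : Fin n → ℝ) : Prop :=
  Monotone μ ∧ ∃ e : V ≃ Fin n, ∀ v, lapEigsUnordered G v = μ (e v)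

section Aux
open Matrix

lemma strictConvexOn_rpow_neg {q : ℝ} (hq : q < 0) :
    StrictConvexOn ℝ (Set.Ioi (0:ℝ)) fun x : ℝ => x ^ q := by
  apply strictConvexOn_of_deriv2_pos' (convex_Ioi 0)
  · intro x hx
    exact (Real.continuousAt_rpow_const x q (Or.inl (ne_of_gt hx))).continuousWithinAt
  · intro x hx
    have hx' : (0:ℝ) < x := hx
    have hev : deriv (fun y : ℝ => y ^ q) =ᶠ[nhds x] fun y : ℝ => q * y ^ (q - 1) := by
      filter_upwards [eventually_ne_nhds hx'.ne'] with y hy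
      exact Real.deriv_rpow_const y q
    have h2 : deriv^[2] (fun y : ℝ => y ^ q) x
        = deriv (fun y : ℝ => q * y ^ (q - 1)) x := by
      simp only [Function.iterate_succ, Function.iterate_zero, Function.comp, id]
      exact Filter.EventuallyEq.deriv_eq hev
    rw [h2, deriv_const_mul _ (Real.hasDerivAt_rpow_const (p := q - 1)
      (Or.inl hx'.ne')).differentiableAt, Real.deriv_rpow_const x (q - 1)]
    have : 0 < x ^ (q - 1 - 1) := Real.rpow_pos_of_pos hx' _
    have hqq : 0 < q * (q - 1) := mul_pos_of_neg_of_neg hq (by linarith)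
    nlinarith [mul_pos hqq this]


lemma core_ineq {ι : Type*} {s : Finset ι} (hs : s.Nonempty) (x : ι → ℝ)
    (hx : ∀ i ∈ s, 0 < x i) {p : ℝ} (hp : 0 < p) :
    (∑ i ∈ s, 1 / x i ^ 2) ≥ ((∑ i ∈ s, x i) ^ (p+1) / ∑ i ∈ s, x i ^ (3*p+1)) ^ (1/p) ∧
    ((∑ i ∈ s, 1 / x i ^ 2) = ((∑ i ∈ s, x i) ^ (p+1) / ∑ i ∈ s, x i ^ (3*p+1)) ^ (1/p) ↔
      ∀ i ∈ s, ∀ j ∈ s, x i = x j) := by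
  classical
  set T := ∑ i ∈ s, x i with hTdef
  set A := ∑ i ∈ s, 1 / x i ^ 2 with hAdef
  set B := ∑ i ∈ s, x i ^ (3*p+1) with hBdef
  have hT : 0 < T := Finset.sum_pos hx hs
  have hA : 0 < A := Finset.sum_pos (fun i hi => by have := hx i hi; positivity) hs
  have hB : 0 < B := Finset.sum_pos (fun i hi => Real.rpow_pos_of_pos (hx i hi) _) hs
  have hconv := strictConvexOn_rpow_neg (q := -p) (by linarith)
  set w : ι → ℝ := fun i => x i / T with hw
  set y : ι → ℝ := fun i => x i ^ (-3 : ℝ) with hy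
  have hw0 : ∀ i ∈ s, 0 < w i := fun i hi => div_pos (hx i hi) hT
  have hw1 : ∑ i ∈ s, w i = 1 := by
    rw [hw, ← Finset.sum_div, ← hTdef, div_self hT.ne']
  have hymem : ∀ i ∈ s, y i ∈ Set.Ioi (0:ℝ) := fun i hi => Real.rpow_pos_of_pos (hx i hi) _
  have hsum1 : ∑ i ∈ s, w i • y i = A / T := by
    rw [hAdef, Finset.sum_div]
    refine Finset.sum_congr rfl fun i hi => ?_
    have h3 : x i ^ (-3 : ℝ) = (x i ^ 3)⁻¹ := by
      rw [← Real.rpow_natCast (x i) 3, ← Real.rpow_neg (hx i hi).le]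
      norm_num
    have hne := (hx i hi).ne'
    show x i / T * x i ^ (-3 : ℝ) = 1 / x i ^ 2 / T
    rw [h3]
    field_simp
  have hsum2 : ∑ i ∈ s, w i • y i ^ (-p) = B / T := by
    rw [hBdef, Finset.sum_div]
    refine Finset.sum_congr rfl fun i hi => ?_
    have h3 : (x i ^ (-3 : ℝ)) ^ (-p) = x i ^ (3*p) := by
      rw [← Real.rpow_mul (hx i hi).le]; norm_num
    show x i / T * (x i ^ (-3 : ℝ)) ^ (-p) = x i ^ (3*p+1) / T
    rw [h3, Real.rpow_add (hx i hi), Real.rpow_one]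
    ring
  have e1 : (A/T) ^ (-p) = T ^ p / A ^ p := by
    rw [Real.rpow_neg (by positivity), Real.div_rpow hA.le hT.le, inv_div]
  have hApos : (0:ℝ) < A ^ p := Real.rpow_pos_of_pos hA _
  have hTp1 : (0:ℝ) < T ^ (p+1) := Real.rpow_pos_of_pos hT _
  have hfin : (A ^ p) ^ (1/p) = A := by
    rw [← Real.rpow_mul hA.le, mul_one_div, div_self hp.ne', Real.rpow_one]
  have claim1 : (A/T) ^ (-p) ≤ B/T → (T ^ (p+1) / B) ^ (1/p) ≤ A := by
    intro h
    rw [e1, div_le_div_iff₀ hApos hT] at h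
    rw [← Real.rpow_add_one hT.ne'] at h
    have h2 : T ^ (p+1) / B ≤ A ^ p := (div_le_iff₀ hB).2 (h.trans_eq (mul_comm _ _))
    calc (T ^ (p+1) / B) ^ (1/p) ≤ (A ^ p) ^ (1/p) :=
          Real.rpow_le_rpow (by positivity) h2 (by positivity)
      _ = A := hfin
  have claim2 : (A/T) ^ (-p) < B/T → (T ^ (p+1) / B) ^ (1/p) < A := by
    intro h
    rw [e1, div_lt_div_iff₀ hApos hT] at h
    rw [← Real.rpow_add_one hT.ne'] at h
    have h2 : T ^ (p+1) / B < A ^ p := (div_lt_iff₀ hB).2 (h.trans_le (mul_comm _ _).le)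
    calc (T ^ (p+1) / B) ^ (1/p) < (A ^ p) ^ (1/p) :=
          Real.rpow_lt_rpow (by positivity) h2 (by positivity)
      _ = A := hfin
  have jensen : (A/T) ^ (-p) ≤ B/T := by
    rw [← hsum1, ← hsum2]
    exact hconv.convexOn.map_sum_le (fun i hi => (hw0 i hi).le) hw1 hymem
  refine ⟨claim1 jensen, ⟨?_, ?_⟩⟩
  · -- equality implies constant
    intro heq
    by_contra hnc
    push_neg at hnc
    obtain ⟨i, hi, j, hj, hij⟩ := hnc
    have hyinj : y i ≠ y j := by
      intro hyy
      apply hij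
      have hxy : ∀ k, k ∈ s → (y k) ^ (-(1:ℝ)/3) = x k := by
        intro k hk
        rw [hy, ← Real.rpow_mul (hx k hk).le]
        norm_num
      rw [← hxy i hi, ← hxy j hj, hyy]
    have hstrict : (A/T) ^ (-p) < B/T := by
      rw [← hsum1, ← hsum2]
      exact hconv.map_sum_lt hw0 hw1 hymem ⟨i, hi, j, hj, hyinj⟩
    exact absurd heq (ne_of_gt (claim2 hstrict))
  · -- constant implies equality
    intro hconst
    obtain ⟨i₀, hi₀⟩ := hs
    set c := x i₀ with hcdef
    have hc : 0 < c := hx i₀ hi₀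
    set k := (s.card : ℝ) with hkdef
    have hk : (0:ℝ) < k := by
      rw [hkdef]
      exact_mod_cast Finset.card_pos.2 ⟨i₀, hi₀⟩
    have hxc : ∀ i ∈ s, x i = c := fun i hi => hconst i hi i₀ hi₀
    have hAe : A = k / c ^ 2 := by
      rw [hAdef, Finset.sum_congr rfl (fun i hi => by rw [hxc i hi]),
        Finset.sum_const, nsmul_eq_mul, ← hkdef, mul_one_div]
    have hTe : T = k * c := by
      rw [hTdef, Finset.sum_congr rfl (fun i hi => hxc i hi), Finset.sum_const,
        nsmul_eq_mul, ← hkdef]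
    have hBe : B = k * c ^ (3*p+1) := by
      rw [hBdef, Finset.sum_congr rfl (fun i hi => by rw [hxc i hi]), Finset.sum_const,
        nsmul_eq_mul, ← hkdef]
    rw [hAe, hTe, hBe]
    have hr1 : (k * c) ^ (p+1) = k ^ (p+1) * c ^ (p+1) := Real.mul_rpow hk.le hc.le
    have hr2 : k ^ (p+1) * c ^ (p+1) / (k * c ^ (3*p+1)) = k ^ p * c ^ (-(2*p)) := by
      rw [Real.rpow_add_one hk.ne']
      have h4 : c ^ (-(2*p)) = c ^ (p+1) / c ^ (3*p+1) := by
        rw [← Real.rpow_sub hc]; ring_nf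
      rw [h4]
      have h5 : c ^ (3*p+1) ≠ 0 := (Real.rpow_pos_of_pos hc _).ne'
      field_simp
    rw [hr1, hr2, Real.mul_rpow (Real.rpow_pos_of_pos hk _).le
      (Real.rpow_pos_of_pos hc _).le, ← Real.rpow_mul hk.le, ← Real.rpow_mul hc.le,
      mul_one_div, div_self hp.ne', Real.rpow_one]
    have h6 : -(2*p) * (1/p) = -2 := by field_simp
    rw [h6]
    have h7 : c ^ (-2 : ℝ) = (c ^ 2)⁻¹ := by
      rw [← Real.rpow_natCast c 2, ← Real.rpow_neg hc.le]
      norm_num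
    rw [h7, div_eq_mul_inv]


section GraphLemmas
variable {V : Type*} [Fintype V] [DecidableEq V] (G : SimpleGraph V) [DecidableRel G.Adj]

lemma lap_trace_eq : ∑ v, lapEigsUnordered G v = 2 * (G.edgeFinset.card : ℝ) := by
  have hA := (SimpleGraph.posSemidef_lapMatrix (R := ℝ) (G := G)).1
  have h1 : (G.lapMatrix ℝ).trace = ∑ v, hA.eigenvalues v := by
    conv_lhs => rw [hA.spectral_theorem, Unitary.conjStarAlgAut_apply]
    rw [Matrix.trace_mul_cycle, Unitary.coe_star_mul_self, one_mul, Matrix.trace_diagonal]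
    simp
  have h2 : (G.lapMatrix ℝ).trace = ∑ v, (G.degree v : ℝ) := by
    simp [Matrix.trace, Matrix.diag, SimpleGraph.lapMatrix, SimpleGraph.degMatrix]
  have h3 : ∑ v, (G.degree v : ℝ) = 2 * (G.edgeFinset.card : ℝ) := by
    rw [← Nat.cast_sum]
    rw [SimpleGraph.sum_degrees_eq_twice_card_edges]
    push_cast
    ring
  rw [lapEigsUnordered, ← h1, h2, h3]

lemma eig_sq_of_lap_sq {c : ℝ} (hAA : G.lapMatrix ℝ * G.lapMatrix ℝ = c • G.lapMatrix ℝ)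
    (v : V) : lapEigsUnordered G v * lapEigsUnordered G v = c * lapEigsUnordered G v := by
  have hA := (SimpleGraph.posSemidef_lapMatrix (R := ℝ) (G := G)).1
  set L := G.lapMatrix ℝ
  set lam := hA.eigenvalues v with hlam
  have h1 : L *ᵥ ⇑(hA.eigenvectorBasis v) = lam • ⇑(hA.eigenvectorBasis v) :=
    hA.mulVec_eigenvectorBasis v
  have h2 : (L * L) *ᵥ ⇑(hA.eigenvectorBasis v) = (lam * lam) • ⇑(hA.eigenvectorBasis v) := by
    rw [← Matrix.mulVec_mulVec, h1, Matrix.mulVec_smul, h1, smul_smul]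
  have h3 : (L * L) *ᵥ ⇑(hA.eigenvectorBasis v) = (c * lam) • ⇑(hA.eigenvectorBasis v) := by
    rw [hAA, Matrix.smul_mulVec, h1, smul_smul]
  have h4 : (lam * lam - c * lam) • ⇑(hA.eigenvectorBasis v) = 0 := by
    rw [sub_smul, h2.symm.trans h3, sub_self]
  have hw : ⇑(hA.eigenvectorBasis v) ≠ 0 := by
    intro h0
    apply hA.eigenvectorBasis.orthonormal.ne_zero v
    ext i
    exact congrFun h0 i
  have := (smul_eq_zero.1 h4).resolve_right hw
  show lam * lam = c * lam
  linarith [sub_eq_zero.1 (by linarith [this] : lam * lam - c * lam = 0)]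

lemma lap_sq_of_eig_sq {c : ℝ}
    (h : ∀ v, lapEigsUnordered G v * lapEigsUnordered G v = c * lapEigsUnordered G v) :
    G.lapMatrix ℝ * G.lapMatrix ℝ = c • G.lapMatrix ℝ := by
  have hA := (SimpleGraph.posSemidef_lapMatrix (R := ℝ) (G := G)).1
  set U := (hA.eigenvectorUnitary : Matrix V V ℝ) with hU
  set D := (Matrix.diagonal (RCLike.ofReal ∘ hA.eigenvalues) : Matrix V V ℝ) with hD
  have hspec : G.lapMatrix ℝ = U * D * star U := hA.spectral_theorem
  have hUU : star U * U = 1 := Unitary.coe_star_mul_self _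
  have hDD : D * D = c • D := by
    have hco : (RCLike.ofReal ∘ hA.eigenvalues : V → ℝ) = hA.eigenvalues := by
      funext v; simp
    rw [hD, hco, Matrix.diagonal_mul_diagonal, ← Matrix.diagonal_smul]
    exact congrArg Matrix.diagonal (funext fun v => h v)
  calc G.lapMatrix ℝ * G.lapMatrix ℝ = (U * D * star U) * (U * D * star U) := by
        rw [← hspec]
    _ = U * (D * ((star U * U) * (D * star U))) := by simp only [Matrix.mul_assoc]
    _ = U * (D * D) * star U := by rw [hUU, one_mul]; simp only [Matrix.mul_assoc]
    _ = c • G.lapMatrix ℝ := by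
        rw [hDD, hspec]
        simp only [Matrix.mul_smul, Matrix.smul_mul, Matrix.mul_assoc]

end GraphLemmas

lemma lap_apply {V : Type*} [Fintype V] [DecidableEq V] (G : SimpleGraph V)
    [DecidableRel G.Adj] (u v : V) :
    G.lapMatrix ℝ u v = (if u = v then (G.degree u : ℝ) else 0) - (if G.Adj u v then 1 else 0) := by
  simp [SimpleGraph.lapMatrix, SimpleGraph.degMatrix, Matrix.diagonal_apply]

lemma eq_top_of_nocommon {V : Type*} (G : SimpleGraph V) (hG : G.Connected)
    (h : ∀ u v w : V, u ≠ v → ¬ G.Adj u v → ¬(G.Adj u w ∧ G.Adj w v)) : G = ⊤ := by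
  ext u v
  simp only [SimpleGraph.top_adj]
  constructor
  · exact fun hadj => hadj.ne
  · intro huv
    by_contra hadj
    have step : ∀ a b : V, (a = u ∨ G.Adj u a) → G.Adj a b → (b = u ∨ G.Adj u b) := by
      rintro a b (rfl | ha) hab
      · exact Or.inr hab
      · by_cases hbu : b = u
        · exact Or.inl hbu
        by_cases hub : G.Adj u b
        · exact Or.inr hub
        · exact absurd ⟨ha, hab⟩ (h u b a (Ne.symm hbu) hub)
    have walk : ∀ (a b : V) (w : G.Walk a b), (a = u ∨ G.Adj u a) → (b = u ∨ G.Adj u b) := by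
      intro a b w
      induction w with
      | nil => exact id
      | cons h' p ih => exact fun ha => ih (step _ _ ha h')
    obtain ⟨w⟩ := hG.preconnected u v
    rcases walk u v w (Or.inl rfl) with rfl | h'
    · exact huv rfl
    · exact hadj h'

lemma top_lap_sq {n : ℕ} (hn : 2 ≤ n) [inst : DecidableRel ((⊤ : SimpleGraph (Fin n)).Adj)] :
    (⊤ : SimpleGraph (Fin n)).lapMatrix ℝ * (⊤ : SimpleGraph (Fin n)).lapMatrix ℝ
      = (n : ℝ) • (⊤ : SimpleGraph (Fin n)).lapMatrix ℝ := by
  set J : Matrix (Fin n) (Fin n) ℝ := Matrix.of (fun _ _ => (1:ℝ)) with hJdef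
  have hL : (⊤ : SimpleGraph (Fin n)).lapMatrix ℝ = (n : ℝ) • 1 - J := by
    ext u v
    rw [lap_apply]
    by_cases h : u = v
    · subst h
      have h1 : (⊤ : SimpleGraph (Fin n)).neighborFinset u = univ.erase u := by
        ext w
        simp [ne_comm]
      have hdeg : (⊤ : SimpleGraph (Fin n)).degree u = n - 1 := by
        rw [← SimpleGraph.card_neighborFinset_eq_degree, h1,
          Finset.card_erase_of_mem (mem_univ u), Finset.card_univ, Fintype.card_fin]
      simp only [if_pos rfl, hdeg, SimpleGraph.top_adj, ne_eq, not_true_eq_false, if_false,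
        Matrix.sub_apply, Matrix.smul_apply, Matrix.one_apply_eq, smul_eq_mul, mul_one, hJdef,
        Matrix.of_apply]
      rw [Nat.cast_sub (by omega)]
      simp
    · simp [h, hJdef, SimpleGraph.top_adj, Matrix.one_apply_ne h]
  have hJJ : J * J = (n : ℝ) • J := by
    ext u v
    simp [Matrix.mul_apply, hJdef]
  rw [hL, sub_mul, mul_sub, mul_sub, hJJ]
  simp only [Matrix.smul_mul, Matrix.mul_smul, one_mul, mul_one, smul_sub]
  module

end Aux

theorem statement_2 {n : ℕ} (hn : 2 ≤ n) (G : SimpleGraph (Fin n)) [DecidableRel G.Adj]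
    (hG : G.Connected) (μ : Fin n → ℝ) (hμ : IsLapEigSeq G μ)
    (hμ1 : μ ⟨0, by omega⟩ = 0) (hμ2 : 0 < μ ⟨1, by omega⟩)
    (p : ℝ) (hp : 0 < p) :
    (n : ℝ) * ∑ i ∈ univ.filter (fun i : Fin n => 0 < i.val), 1 / μ i ^ 2 ≥
      (n : ℝ) * ((2 * (G.edgeFinset.card : ℝ)) ^ (p + 1) /
          ∑ i ∈ univ.filter (fun i : Fin n => 0 < i.val), μ i ^ (3 * p + 1)) ^ (1 / p) ∧
    ((n : ℝ) * ∑ i ∈ univ.filter (fun i : Fin n => 0 < i.val), 1 / μ i ^ 2 =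
      (n : ℝ) * ((2 * (G.edgeFinset.card : ℝ)) ^ (p + 1) /
          ∑ i ∈ univ.filter (fun i : Fin n => 0 < i.val), μ i ^ (3 * p + 1)) ^ (1 / p) ↔
      G = ⊤) := by
  classical
  obtain ⟨hmono, e, he⟩ := hμ
  have hn0 : (0:ℝ) < n := by exact_mod_cast (by omega : 0 < n)
  set s := univ.filter (fun i : Fin n => 0 < i.val) with hs
  have hger : s = univ.erase ⟨0, by omega⟩ := by
    ext i
    simp only [hs, Finset.mem_erase, Finset.mem_filter, Finset.mem_univ, true_and, and_true,
      Fin.ext_iff, ne_eq]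
    omega
  have h1mem : (⟨1, by omega⟩ : Fin n) ∈ s := by simp [hs]
  have hsne : s.Nonempty := ⟨_, h1mem⟩
  have hxpos : ∀ i ∈ s, 0 < μ i := by
    intro i hi
    have hi' : 0 < i.val := by simpa [hs] using hi
    exact hμ2.trans_le (hmono (show (⟨1, by omega⟩ : Fin n) ≤ i by rw [Fin.le_def]; exact hi'))
  have hTsum : ∑ i ∈ s, μ i = 2 * (G.edgeFinset.card : ℝ) := by
    have hall : ∑ i : Fin n, μ i = 2 * (G.edgeFinset.card : ℝ) := by
      rw [← lap_trace_eq G]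
      exact (Fintype.sum_equiv e (lapEigsUnordered G) μ he).symm
    have hsplit : μ ⟨0, by omega⟩ + ∑ i ∈ s, μ i = ∑ i : Fin n, μ i := by
      rw [hger]; exact Finset.add_sum_erase univ μ (mem_univ _)
    rw [← hall, ← hsplit, hμ1, zero_add]
  obtain ⟨hineq, hiff⟩ := core_ineq hsne μ hxpos hp
  rw [hTsum] at hineq hiff
  constructor
  · exact mul_le_mul_of_nonneg_left hineq hn0.le
  · rw [mul_right_inj' hn0.ne', hiff]
    constructor
    · intro hconst
      set c := μ ⟨1, by omega⟩ with hc
      have hcall : ∀ i ∈ s, μ i = c := fun i hi => hconst i hi _ h1mem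
      have hall : ∀ j : Fin n, μ j * μ j = c * μ j := by
        intro j
        by_cases hj : 0 < j.val
        · rw [hcall j (by simp [hs, hj])]
        · have hj0 : j = ⟨0, by omega⟩ := by apply Fin.ext; simp; omega
          rw [hj0, hμ1]; ring
      have heig : ∀ v, lapEigsUnordered G v * lapEigsUnordered G v = c * lapEigsUnordered G v :=
        fun v => by rw [he v]; exact hall _
      have hAA := lap_sq_of_eig_sq G heig
      apply eq_top_of_nocommon G hG
      rintro u v w huv hnadj ⟨h1, h2⟩
      have hent := congrFun (congrFun hAA u) v
      rw [Matrix.mul_apply, Matrix.smul_apply, smul_eq_mul] at hent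
      have hLuv : G.lapMatrix ℝ u v = 0 := by rw [lap_apply]; simp [huv, hnadj]
      have hpos : 0 < ∑ k, G.lapMatrix ℝ u k * G.lapMatrix ℝ k v := by
        apply Finset.sum_pos'
        · intro k _
          by_cases hku : k = u
          · subst hku
            rw [hLuv, mul_zero]
          by_cases hkv : k = v
          · subst hkv
            rw [hLuv, zero_mul]
          · have e1 : G.lapMatrix ℝ u k ≤ 0 := by
              rw [lap_apply, if_neg (fun hh => hku hh.symm)]
              split_ifs <;> norm_num
            have e2 : G.lapMatrix ℝ k v ≤ 0 := by
              rw [lap_apply, if_neg hkv]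
              split_ifs <;> norm_num
            nlinarith [e1, e2]
        · refine ⟨w, mem_univ w, ?_⟩
          have hwu : w ≠ u := h1.ne'
          have hwv : w ≠ v := fun hh => hnadj (hh ▸ h1)
          have e1 : G.lapMatrix ℝ u w = 0 - 1 := by
            rw [lap_apply, if_neg (fun hh => hwu hh.symm), if_pos h1]
          have e2 : G.lapMatrix ℝ w v = 0 - 1 := by
            rw [lap_apply, if_neg hwv, if_pos h2]
          rw [e1, e2]; norm_num
      rw [hLuv, mul_zero] at hent
      rw [hent] at hpos
      exact lt_irrefl 0 hpos
    · rintro rfl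
      intro i hi j hj
      have hval : ∀ k : Fin n, k ∈ s → μ k = (n : ℝ) := by
        intro k hk
        have h1 : lapEigsUnordered ⊤ (e.symm k) = μ k := by
          rw [he (e.symm k), Equiv.apply_symm_apply]
        have h2 := eig_sq_of_lap_sq (⊤ : SimpleGraph (Fin n)) (top_lap_sq hn) (e.symm k)
        rw [h1] at h2
        exact mul_right_cancel₀ (hxpos k hk).ne' h2
      rw [hval i hi, hval j hj]
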